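/- Let σ, b : [0,1] → ℝ be continuous with σ(x) > 0 for all x, let C₀ > 0, and define μ(x) = 2·C₀·σ(x)^{-2}·exp( ∫₀ˣ 2·b(y)·σ(y)^{-2} dy ) and S(x) = σ(x)²·μ(x)/2. Let ν ∈ ℝ and let u : [0,1] → ℝ be twice differentiable with u'(0) = 0, such that S·u' is differentiable with (S·u')'(x) = ν·u(x)·μ(x) for all x ∈ [0,1]. Then at every point x ∈ [0,1] with u'(x) ≠ 0, b(x) = ν·( u(x)·u'(x)·μ(x) − u''(x)·∫₀ˣ u(y)·μ(y) dy ) / ( u'(x)²·μ(x) ). -/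

import Mathlib

open Set intervalIntegral

lemma ftc01 (f : ℝ → ℝ) (hf : ContinuousOn f (Icc (0:ℝ) 1)) {x : ℝ} (hx : x ∈ Icc (0:ℝ) 1) :
    HasDerivWithinAt (fun t => ∫ y in (0:ℝ)..t, f y) (f x) (Icc (0:ℝ) 1) x := by
  set g : ℝ → ℝ := IccExtend zero_le_one (fun y : Icc (0:ℝ) 1 => f y) with hg
  have hgc : Continuous g := (continuousOn_iff_continuous_restrict.1 hf).Icc_extend'
  have hgf : ∀ t ∈ Icc (0:ℝ) 1, g t = f t := fun t ht => IccExtend_of_mem _ _ ht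
  have hD : HasDerivAt (fun t => ∫ y in (0:ℝ)..t, g y) (g x) x :=
    integral_hasDerivAt_right (hgc.intervalIntegrable _ _)
      hgc.stronglyMeasurable.stronglyMeasurableAtFilter hgc.continuousAt
  have heq : EqOn (fun t => ∫ y in (0:ℝ)..t, g y) (fun t => ∫ y in (0:ℝ)..t, f y)
      (Icc (0:ℝ) 1) := by
    intro t ht
    refine intervalIntegral.integral_congr fun y hy => hgf y ?_
    rw [uIcc_of_le ht.1] at hy
    exact ⟨hy.1, hy.2.trans ht.2⟩
  exact (hD.hasDerivWithinAt.congr heq.symm (heq hx).symm).congr_deriv (hgf x hx)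

/-- Identification of the drift coefficient from an eigenpair:
if `(S u')' = ν u μ` on `[0,1]` with `u'(0) = 0`, then wherever `u'(x) ≠ 0`,
`b(x) = ν (u u' μ − u'' ∫₀ˣ u μ)/(u'² μ)(x)`. -/
theorem stmt_14 (σ b : ℝ → ℝ) (hσc : ContinuousOn σ (Icc (0 : ℝ) 1))
    (hbc : ContinuousOn b (Icc (0 : ℝ) 1)) (hσpos : ∀ x ∈ Icc (0 : ℝ) 1, 0 < σ x)
    (C₀ : ℝ) (hC₀ : 0 < C₀) (μ S : ℝ → ℝ)
    (hμ : ∀ x, μ x = 2 * C₀ * (σ x) ^ (-2 : ℤ) *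
      Real.exp (∫ y in (0 : ℝ)..x, 2 * b y * (σ y) ^ (-2 : ℤ)))
    (hS : ∀ x, S x = σ x ^ 2 * μ x / 2)
    (ν : ℝ) (u u' u'' : ℝ → ℝ)
    (hu' : ∀ x ∈ Icc (0 : ℝ) 1, HasDerivWithinAt u (u' x) (Icc (0 : ℝ) 1) x)
    (hu'' : ∀ x ∈ Icc (0 : ℝ) 1, HasDerivWithinAt u' (u'' x) (Icc (0 : ℝ) 1) x)
    (hu'0 : u' 0 = 0)
    (heig : ∀ x ∈ Icc (0 : ℝ) 1,
      HasDerivWithinAt (fun t => S t * u' t) (ν * u x * μ x) (Icc (0 : ℝ) 1) x) :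
    ∀ x ∈ Icc (0 : ℝ) 1, u' x ≠ 0 →
      b x = ν * (u x * u' x * μ x - u'' x * ∫ y in (0 : ℝ)..x, u y * μ y) /
        (u' x ^ 2 * μ x) := by
  have h01 : (0:ℝ) ∈ Icc (0:ℝ) 1 := ⟨le_refl 0, zero_le_one⟩
  have hσne : ∀ x ∈ Icc (0:ℝ) 1, σ x ≠ 0 := fun x hx => (hσpos x hx).ne'
  set g : ℝ → ℝ := fun x => ∫ y in (0:ℝ)..x, 2 * b y * (σ y) ^ (-2 : ℤ) with hgdef
  have hzp : ∀ y : ℝ, (σ y) ^ (-2 : ℤ) = ((σ y) ^ 2)⁻¹ := fun y => by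
    rw [zpow_neg]; norm_cast
  have hintc : ContinuousOn (fun y => 2 * b y * (σ y) ^ (-2 : ℤ)) (Icc (0:ℝ) 1) := by
    simp only [hzp]
    exact (continuousOn_const.mul hbc).mul
      ((hσc.pow 2).inv₀ fun y hy => pow_ne_zero 2 (hσne y hy))
  have hge : ∀ x ∈ Icc (0:ℝ) 1,
      HasDerivWithinAt g (2 * b x * (σ x) ^ (-2 : ℤ)) (Icc (0:ℝ) 1) x :=
    fun x hx => ftc01 _ hintc hx
  have hgc : ContinuousOn g (Icc (0:ℝ) 1) :=
    fun x hx => (hge x hx).continuousWithinAt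
  have hμg : ∀ x, μ x = 2 * C₀ * ((σ x) ^ 2)⁻¹ * Real.exp (g x) := fun x => by
    rw [hμ x, hzp x]
  have hμc : ContinuousOn μ (Icc (0:ℝ) 1) := by
    have h1 : ContinuousOn (fun x => 2 * C₀ * ((σ x) ^ 2)⁻¹ * Real.exp (g x)) (Icc (0:ℝ) 1) :=
      (continuousOn_const.mul ((hσc.pow 2).inv₀ fun y hy => pow_ne_zero 2 (hσne y hy))).mul
        (Real.continuous_exp.comp_continuousOn hgc)
    exact h1.congr fun x _ => hμg x
  have hμpos : ∀ x ∈ Icc (0:ℝ) 1, 0 < μ x := by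
    intro x hx
    rw [hμg x]
    exact mul_pos (mul_pos (by linarith) (inv_pos.2 (pow_pos (hσpos x hx) 2)))
      (Real.exp_pos _)
  -- S = C₀ exp g on Icc
  have hSeq : ∀ x ∈ Icc (0:ℝ) 1, S x = C₀ * Real.exp (g x) := by
    intro x hx
    rw [hS x, hμg x]
    have h2 : σ x ^ 2 ≠ 0 := pow_ne_zero 2 (hσne x hx)
    have h3 : σ x ^ 2 * (σ x ^ 2)⁻¹ = 1 := mul_inv_cancel₀ h2
    linear_combination (C₀ * Real.exp (g x)) * h3
  -- derivative of S within Icc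
  have hS' : ∀ x ∈ Icc (0:ℝ) 1, HasDerivWithinAt S (b x * μ x) (Icc (0:ℝ) 1) x := by
    intro x hx
    have hD : HasDerivWithinAt (fun t => C₀ * Real.exp (g t))
        (C₀ * (Real.exp (g x) * (2 * b x * (σ x) ^ (-2:ℤ)))) (Icc (0:ℝ) 1) x :=
      ((hge x hx).exp).const_mul C₀
    have hval : C₀ * (Real.exp (g x) * (2 * b x * (σ x) ^ (-2:ℤ))) = b x * μ x := by
      rw [hμg x, hzp x]; ring
    exact (hD.congr (fun y hy => (hSeq y hy)) (hSeq x hx)).congr_deriv hval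
  have hud : UniqueDiffOn ℝ (Icc (0:ℝ) 1) := uniqueDiffOn_Icc one_pos
  -- product rule and uniqueness of derivative
  have eq1 : ∀ x ∈ Icc (0:ℝ) 1,
      ν * u x * μ x = b x * μ x * u' x + S x * u'' x := by
    intro x hx
    have hprod : HasDerivWithinAt (fun t => S t * u' t)
        (b x * μ x * u' x + S x * u'' x) (Icc (0:ℝ) 1) x :=
      (hS' x hx).mul (hu'' x hx)
    rw [← (heig x hx).derivWithin (hud x hx), ← hprod.derivWithin (hud x hx)]
  -- FTC on the eigen-equation: S u' = ν ∫ u μ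
  have huc : ContinuousOn u (Icc (0:ℝ) 1) := fun x hx => (hu' x hx).continuousWithinAt
  have huμc : ContinuousOn (fun y => u y * μ y) (Icc (0:ℝ) 1) := huc.mul hμc
  have eq2 : ∀ x ∈ Icc (0:ℝ) 1,
      S x * u' x = ν * ∫ y in (0:ℝ)..x, u y * μ y := by
    have hF : ∀ x ∈ Icc (0:ℝ) 1, HasDerivWithinAt
        (fun t => S t * u' t - ν * ∫ y in (0:ℝ)..t, u y * μ y) 0 (Icc (0:ℝ) 1) x := by
      intro x hx
      have := (heig x hx).sub ((ftc01 _ huμc hx).const_mul ν)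
      refine this.congr_deriv (by ring)
    have hconst : ∀ x ∈ Icc (0:ℝ) 1,
        (fun t => S t * u' t - ν * ∫ y in (0:ℝ)..t, u y * μ y) x
        = (fun t => S t * u' t - ν * ∫ y in (0:ℝ)..t, u y * μ y) 0 := by
      intro x hx
      refine (convex_Icc (0:ℝ) 1).is_const_of_fderivWithin_eq_zero
        (fun y hy => ((hF y hy).differentiableWithinAt)) ?_ hx h01
      intro y hy
      rw [(hF y hy).hasFDerivWithinAt.fderivWithin (hud y hy)]
      ext1; simp
    intro x hx
    have := hconst x hx
    simp only [hu'0, intervalIntegral.integral_same] at this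
    have h0 : S x * u' x - ν * ∫ y in (0:ℝ)..x, u y * μ y = 0 := by
      simpa using this
    linarith
  intro x hx hux
  have hμx : 0 < μ x := hμpos x hx
  have e1 := eq1 x hx
  have e2 := eq2 x hx
  rw [eq_div_iff (by positivity)]
  linear_combination (-(u' x)) * e1 - u'' x * e2
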